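/- For every graph G on n ≥ 3 vertices, 6·p(K3,G) + 6·p(K̄3,G) − 2·p(P3,G) − 2·p(P̄3,G) = s(G) + O(1/n), where s(G) = C(n,3)^{-1} · Σ_{x∈V(G)} (d_G(x) − d_{Ḡ}(x))² ≥ 0; here p(F,G) is the induced density of F in G. In particular, 3·p(K3,G) + 3·p(K̄3,G) ≥ p(P3,G) + p(P̄3,G) − O(1/n). -/

import Mathlib

open Finset

/-- The induced density of a 3-vertex graph `F` in a graph `G` on `n` vertices. -/
noncomputable def triDensity (n : ℕ) (F : SimpleGraph (Fin 3)) (G : SimpleGraph (Fin n)) : ℝ :=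
  (Nat.card {X : Finset (Fin n) // X.card = 3 ∧
      Nonempty (G.induce (↑X : Set (Fin n)) ≃g F)} : ℝ) / (n.choose 3 : ℝ)

/-- The path on three vertices `0-1-2`. -/
def pathP3 : SimpleGraph (Fin 3) where
  Adj u v := (u.val = 0 ∧ v.val = 1) ∨ (u.val = 1 ∧ v.val = 0) ∨
    (u.val = 1 ∧ v.val = 2) ∨ (u.val = 2 ∧ v.val = 1)
  symm := ⟨by intro u v h; tauto⟩
  loopless := ⟨by intro v h; omega⟩

namespace Stmt13Aux

/-- Graph on `Fin 3` with edges 01, 02, 12 controlled by booleans `a b c`. -/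
def H3 (a b c : Bool) : SimpleGraph (Fin 3) where
  Adj i j := ((i.val = 0 ∧ j.val = 1 ∨ i.val = 1 ∧ j.val = 0) ∧ a = true) ∨
             ((i.val = 0 ∧ j.val = 2 ∨ i.val = 2 ∧ j.val = 0) ∧ b = true) ∨
             ((i.val = 1 ∧ j.val = 2 ∨ i.val = 2 ∧ j.val = 1) ∧ c = true)
  symm := ⟨by intro u v h; tauto⟩
  loopless := ⟨by intro v h; rcases h with ⟨h | h, _⟩ | ⟨h | h, _⟩ | ⟨h | h, _⟩ <;> omega⟩

instance H3.adjDecidable (a b c : Bool) : DecidableRel (H3 a b c).Adj := fun _ _ =>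
  inferInstanceAs (Decidable (_ ∨ _ ∨ _))

instance pathP3.adjDecidable : DecidableRel pathP3.Adj := fun _ _ =>
  inferInstanceAs (Decidable (_ ∨ _ ∨ _ ∨ _))

lemma iso_congr {V W : Type*} {A : SimpleGraph V} {B : SimpleGraph W} {F : SimpleGraph (Fin 3)}
    (h : A ≃g B) : Nonempty (B ≃g F) ↔ Nonempty (A ≃g F) :=
  ⟨fun ⟨f⟩ => ⟨f.comp h⟩, fun ⟨f⟩ => ⟨f.comp h.symm⟩⟩

lemma nonempty_iso_iff (A B : SimpleGraph (Fin 3)) :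
    Nonempty (A ≃g B) ↔ ∃ σ : Equiv.Perm (Fin 3), ∀ i j, A.Adj i j ↔ B.Adj (σ i) (σ j) := by
  constructor
  · rintro ⟨f⟩
    exact ⟨f.toEquiv, fun i j => (f.map_adj_iff).symm⟩
  · rintro ⟨σ, h⟩
    exact ⟨⟨σ, fun {i j} => (h i j).symm⟩⟩

lemma classT : ∀ a b c : Bool,
    ((∃ σ : Equiv.Perm (Fin 3), ∀ i j, (H3 a b c).Adj i j ↔
        (⊤ : SimpleGraph (Fin 3)).Adj (σ i) (σ j)) ↔ (a ∧ b ∧ c)) := by decide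

lemma classB : ∀ a b c : Bool,
    ((∃ σ : Equiv.Perm (Fin 3), ∀ i j, (H3 a b c).Adj i j ↔
        (⊥ : SimpleGraph (Fin 3)).Adj (σ i) (σ j)) ↔
      (a = false ∧ b = false ∧ c = false)) := by decide

lemma classP : ∀ a b c : Bool,
    ((∃ σ : Equiv.Perm (Fin 3), ∀ i j, (H3 a b c).Adj i j ↔ pathP3.Adj (σ i) (σ j)) ↔
      ((a ∧ b ∧ c = false) ∨ (a ∧ b = false ∧ c) ∨ (a = false ∧ b ∧ c))) := by decide

lemma classPc : ∀ a b c : Bool,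
    ((∃ σ : Equiv.Perm (Fin 3), ∀ i j, (H3 a b c).Adj i j ↔ pathP3ᶜ.Adj (σ i) (σ j)) ↔
      ((a ∧ b = false ∧ c = false) ∨ (a = false ∧ b ∧ c = false) ∨
        (a = false ∧ b = false ∧ c))) := by decide

variable {n : ℕ}

def tripEquiv {x y z : Fin n} (hxy : x ≠ y) (hxz : x ≠ z) (hyz : y ≠ z) :
    Fin 3 ≃ (↑({x, y, z} : Finset (Fin n)) : Set (Fin n)) where
  toFun i := if i = 0 then ⟨x, by simp⟩ else if i = 1 then ⟨y, by simp⟩ else ⟨z, by simp⟩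
  invFun v := if (v : Fin n) = x then 0 else if (v : Fin n) = y then 1 else 2
  left_inv i := by fin_cases i <;> simp [hxy.symm, hxz.symm, hyz.symm, hxy, hxz, hyz]
  right_inv v := by
    have hv : (v : Fin n) = x ∨ (v : Fin n) = y ∨ (v : Fin n) = z := by
      have := v.2; simpa using this
    rcases hv with h | h | h <;>
      simp [h, hxy.symm, hxz.symm, hyz.symm, Subtype.ext_iff]

def tripIso (G : SimpleGraph (Fin n)) [DecidableRel G.Adj] {x y z : Fin n}
    (hxy : x ≠ y) (hxz : x ≠ z) (hyz : y ≠ z) :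
    H3 (decide (G.Adj x y)) (decide (G.Adj x z)) (decide (G.Adj y z)) ≃g
      G.induce (↑({x, y, z} : Finset (Fin n)) : Set (Fin n)) where
  toEquiv := tripEquiv hxy hxz hyz
  map_rel_iff' := by
    intro i j
    fin_cases i <;> fin_cases j <;>
      (first
        | (simp [tripEquiv, H3, SimpleGraph.comap_adj, Function.Embedding.coe_subtype,
            G.adj_comm, G.irrefl, decide_eq_true_eq] <;> exact Iff.rfl)
        | rfl)

section classify

variable (G : SimpleGraph (Fin n)) [DecidableRel G.Adj] {x y z : Fin n}

lemma classifyT (hxy : x ≠ y) (hxz : x ≠ z) (hyz : y ≠ z) :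
    Nonempty (G.induce (↑({x, y, z} : Finset (Fin n)) : Set (Fin n)) ≃g
        (⊤ : SimpleGraph (Fin 3))) ↔ (G.Adj x y ∧ G.Adj x z ∧ G.Adj y z) := by
  rw [iso_congr (tripIso G hxy hxz hyz), nonempty_iso_iff, classT]
  simp

lemma classifyB (hxy : x ≠ y) (hxz : x ≠ z) (hyz : y ≠ z) :
    Nonempty (G.induce (↑({x, y, z} : Finset (Fin n)) : Set (Fin n)) ≃g
        (⊥ : SimpleGraph (Fin 3))) ↔ (¬G.Adj x y ∧ ¬G.Adj x z ∧ ¬G.Adj y z) := by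
  rw [iso_congr (tripIso G hxy hxz hyz), nonempty_iso_iff, classB]
  simp

lemma classifyP (hxy : x ≠ y) (hxz : x ≠ z) (hyz : y ≠ z) :
    Nonempty (G.induce (↑({x, y, z} : Finset (Fin n)) : Set (Fin n)) ≃g pathP3) ↔
      ((G.Adj x y ∧ G.Adj x z ∧ ¬G.Adj y z) ∨ (G.Adj x y ∧ ¬G.Adj x z ∧ G.Adj y z) ∨
        (¬G.Adj x y ∧ G.Adj x z ∧ G.Adj y z)) := by
  rw [iso_congr (tripIso G hxy hxz hyz), nonempty_iso_iff, classP]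
  simp

lemma classifyPc (hxy : x ≠ y) (hxz : x ≠ z) (hyz : y ≠ z) :
    Nonempty (G.induce (↑({x, y, z} : Finset (Fin n)) : Set (Fin n)) ≃g pathP3ᶜ) ↔
      ((G.Adj x y ∧ ¬G.Adj x z ∧ ¬G.Adj y z) ∨ (¬G.Adj x y ∧ G.Adj x z ∧ ¬G.Adj y z) ∨
        (¬G.Adj x y ∧ ¬G.Adj x z ∧ G.Adj y z)) := by
  rw [iso_congr (tripIso G hxy hxz hyz), nonempty_iso_iff, classPc]
  simp

end classify


noncomputable def indic (P : Prop) : ℝ :=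
  letI := Classical.propDecidable P
  if P then 1 else 0

lemma indic_pos {P : Prop} (h : P) : indic P = 1 := by simp [indic, h]
lemma indic_neg {P : Prop} (h : ¬P) : indic P = 0 := by simp [indic, h]
lemma indic_congr {P Q : Prop} (h : P ↔ Q) : indic P = indic Q := by
  by_cases hP : P
  · rw [indic_pos hP, indic_pos (h.1 hP)]
  · rw [indic_neg hP, indic_neg (fun hq => hP (h.2 hq))]

def DD (n : ℕ) : Finset (Fin n × Fin n × Fin n) :=
  univ.filter fun p => p.1 ≠ p.2.1 ∧ p.1 ≠ p.2.2 ∧ p.2.1 ≠ p.2.2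

def aR (G : SimpleGraph (Fin n)) [DecidableRel G.Adj] (u v : Fin n) : ℝ :=
  if G.Adj u v then 1 else 0

def BB (G : SimpleGraph (Fin n)) [DecidableRel G.Adj] (p : Fin n × Fin n × Fin n) : ℝ :=
  aR G p.1 p.2.1 * aR G p.2.1 p.2.2 * aR G p.1 p.2.2
  + (1 - aR G p.1 p.2.1) * (1 - aR G p.2.1 p.2.2) * (1 - aR G p.1 p.2.2)
  - aR G p.1 p.2.1 * aR G p.2.1 p.2.2 * (1 - aR G p.1 p.2.2)
  - (1 - aR G p.1 p.2.1) * (1 - aR G p.2.1 p.2.2) * aR G p.1 p.2.2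

lemma fiber_eq {x y z : Fin n} (hxy : x ≠ y) (hxz : x ≠ z) (hyz : y ≠ z) :
    (DD n).filter (fun p => ({p.1, p.2.1, p.2.2} : Finset (Fin n)) = {x, y, z}) =
      ({(x,y,z), (x,z,y), (y,x,z), (y,z,x), (z,x,y), (z,y,x)} :
        Finset (Fin n × Fin n × Fin n)) := by
  have hyx := hxy.symm; have hzx := hxz.symm; have hzy := hyz.symm
  ext ⟨p1, p2, p3⟩
  simp only [DD, mem_filter, mem_univ, true_and, mem_insert, mem_singleton, Prod.mk.injEq]
  constructor
  · rintro ⟨⟨h12, h13, h23⟩, hset⟩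
    have m1 : p1 = x ∨ p1 = y ∨ p1 = z := by
      have : p1 ∈ ({x, y, z} : Finset (Fin n)) := by rw [← hset]; simp
      simpa using this
    have m2 : p2 = x ∨ p2 = y ∨ p2 = z := by
      have : p2 ∈ ({x, y, z} : Finset (Fin n)) := by rw [← hset]; simp
      simpa using this
    have m3 : p3 = x ∨ p3 = y ∨ p3 = z := by
      have : p3 ∈ ({x, y, z} : Finset (Fin n)) := by rw [← hset]; simp
      simpa using this
    rcases m1 with rfl | rfl | rfl <;> rcases m2 with rfl | rfl | rfl <;>
      rcases m3 with rfl | rfl | rfl <;> simp_all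
  · rintro (⟨rfl, rfl, rfl⟩ | ⟨rfl, rfl, rfl⟩ | ⟨rfl, rfl, rfl⟩ | ⟨rfl, rfl, rfl⟩ |
      ⟨rfl, rfl, rfl⟩ | ⟨rfl, rfl, rfl⟩) <;>
      refine ⟨⟨by assumption, by assumption, by assumption⟩, ?_⟩ <;>
      (ext a; simp; try tauto)

lemma master1 (G : SimpleGraph (Fin n)) [DecidableRel G.Adj] :
    ∑ p ∈ DD n, BB G p = ∑ X ∈ powersetCard 3 (univ : Finset (Fin n)),
      (6 * indic (Nonempty (G.induce (↑X : Set (Fin n)) ≃g (⊤ : SimpleGraph (Fin 3))))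
       + 6 * indic (Nonempty (G.induce (↑X : Set (Fin n)) ≃g (⊥ : SimpleGraph (Fin 3))))
       - 2 * indic (Nonempty (G.induce (↑X : Set (Fin n)) ≃g pathP3))
       - 2 * indic (Nonempty (G.induce (↑X : Set (Fin n)) ≃g pathP3ᶜ))) := by
  classical
  have hmaps : ∀ p ∈ DD n,
      ({p.1, p.2.1, p.2.2} : Finset (Fin n)) ∈ powersetCard 3 (univ : Finset (Fin n)) := by
    intro p hp
    simp only [DD, mem_filter, mem_univ, true_and] at hp
    rw [mem_powersetCard_univ]
    rw [card_insert_of_notMem (by simp [hp.1, hp.2.1]),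
      card_insert_of_notMem (by simp [hp.2.2]), card_singleton]
  rw [← Finset.sum_fiberwise_of_maps_to hmaps (BB G)]
  refine Finset.sum_congr rfl fun X hX => ?_
  obtain ⟨x, y, z, hxy, hxz, hyz, rfl⟩ := card_eq_three.1 (mem_powersetCard_univ.1 hX)
  have hyx := hxy.symm; have hzx := hxz.symm; have hzy := hyz.symm
  rw [show (DD n).filter
      (fun p : Fin n × Fin n × Fin n => ({p.1, p.2.1, p.2.2} : Finset (Fin n)) = {x, y, z})
      = _ from fiber_eq hxy hxz hyz]
  rw [indic_congr (classifyT G hxy hxz hyz), indic_congr (classifyB G hxy hxz hyz),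
    indic_congr (classifyP G hxy hxz hyz), indic_congr (classifyPc G hxy hxz hyz)]
  rw [Finset.sum_insert (by simp [Prod.ext_iff, hxy, hxz, hyz, hyx, hzx, hzy]),
    Finset.sum_insert (by simp [Prod.ext_iff, hxy, hxz, hyz, hyx, hzx, hzy]),
    Finset.sum_insert (by simp [Prod.ext_iff, hxy, hxz, hyz, hyx, hzx, hzy]),
    Finset.sum_insert (by simp [Prod.ext_iff, hxy, hxz, hyz, hyx, hzx, hzy]),
    Finset.sum_insert (by simp [Prod.ext_iff, hxy, hxz, hyz, hyx, hzx, hzy]),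
    Finset.sum_singleton]
  by_cases h1 : G.Adj x y <;> by_cases h2 : G.Adj x z <;> by_cases h3 : G.Adj y z <;>
    simp [BB, aR, h1, h2, h3, G.adj_comm y x, G.adj_comm z x, G.adj_comm z y,
      indic_pos, indic_neg] <;>
    norm_num


lemma mem_DD {p : Fin n × Fin n × Fin n} :
    p ∈ DD n ↔ p.1 ≠ p.2.1 ∧ p.1 ≠ p.2.2 ∧ p.2.1 ≠ p.2.2 := by simp [DD]

variable (G : SimpleGraph (Fin n)) [DecidableRel G.Adj]

lemma aR_self (u : Fin n) : aR G u u = 0 := by simp [aR]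

lemma aR_comm (u v : Fin n) : aR G u v = aR G v u := by
  unfold aR
  congr 1
  · exact propext (G.adj_comm u v)

lemma aR_mul_self (u v : Fin n) : aR G u v * aR G u v = aR G u v := by
  by_cases h : G.Adj u v <;> simp [aR, h]

lemma sum_aR (x : Fin n) : ∑ y : Fin n, aR G x y = (G.degree x : ℝ) := by
  simp [aR, SimpleGraph.degree, SimpleGraph.neighborFinset_eq_filter, Finset.sum_ite_eq]

lemma sum_eq_A : ∑ p ∈ DD n, aR G p.2.1 p.2.2 = ∑ p ∈ DD n, aR G p.1 p.2.1 := by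
  refine Finset.sum_equiv
    ⟨fun p => (p.2.1, p.2.2, p.1), fun p => (p.2.2, p.1, p.2.1),
      fun p => rfl, fun p => rfl⟩ (fun p => ?_) (fun p _ => rfl)
  simp only [mem_DD, Equiv.coe_fn_mk]
  constructor
  · rintro ⟨h1, h2, h3⟩; exact ⟨h3, h1.symm, h2.symm⟩
  · rintro ⟨h1, h2, h3⟩; exact ⟨h2.symm, h3.symm, h1⟩

lemma sum_eq_C : ∑ p ∈ DD n, aR G p.1 p.2.2 = ∑ p ∈ DD n, aR G p.1 p.2.1 := by
  refine Finset.sum_equiv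
    ⟨fun p => (p.1, p.2.2, p.2.1), fun p => (p.1, p.2.2, p.2.1),
      fun p => rfl, fun p => rfl⟩ (fun p => ?_) (fun p _ => rfl)
  simp only [mem_DD, Equiv.coe_fn_mk]
  constructor
  · rintro ⟨h1, h2, h3⟩; exact ⟨h2, h1, h3.symm⟩
  · rintro ⟨h1, h2, h3⟩; exact ⟨h2, h1, h3.symm⟩

lemma sum_eq_AC : ∑ p ∈ DD n, aR G p.2.1 p.2.2 * aR G p.1 p.2.2
    = ∑ p ∈ DD n, aR G p.1 p.2.1 * aR G p.1 p.2.2 := by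
  refine Finset.sum_equiv
    ⟨fun p => (p.2.2, p.2.1, p.1), fun p => (p.2.2, p.2.1, p.1),
      fun p => rfl, fun p => rfl⟩ (fun p => ?_) (fun p _ => ?_)
  · simp only [mem_DD, Equiv.coe_fn_mk]
    constructor
    · rintro ⟨h1, h2, h3⟩; exact ⟨h3.symm, h2.symm, h1.symm⟩
    · rintro ⟨h1, h2, h3⟩; exact ⟨h3.symm, h2.symm, h1.symm⟩
  · simp only [Equiv.coe_fn_mk]
    rw [aR_comm G p.2.2 p.2.1, aR_comm G p.2.2 p.1]

lemma card_filter_ne_pair (hn : 3 ≤ n) {x y : Fin n} (hxy : x ≠ y) :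
    ((univ : Finset (Fin n)).filter fun z => z ≠ x ∧ z ≠ y).card = n - 2 := by
  have : ((univ : Finset (Fin n)).filter fun z => z ≠ x ∧ z ≠ y) = univ \ {x, y} := by
    ext a; simp [not_or]
  rw [this, card_sdiff_of_subset (subset_univ _), card_univ, Fintype.card_fin,
    card_insert_of_notMem (by simp [hxy]), card_singleton]

lemma sum_ite_dist (hn : 3 ≤ n) (x y : Fin n) (K : ℝ) :
    ∑ z : Fin n, (if x ≠ y ∧ x ≠ z ∧ y ≠ z then K else 0) =
      if x ≠ y then K * ((n : ℝ) - 2) else 0 := by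
  by_cases hxy : x = y
  · simp [hxy]
  · have hpt : ∀ z, (if x ≠ y ∧ x ≠ z ∧ y ≠ z then K else 0)
        = if z ≠ x ∧ z ≠ y then K else 0 := by
      intro z
      by_cases h2 : x = z <;> by_cases h3 : y = z <;>
        simp [hxy, h2, h3, eq_comm, Ne]
    rw [Finset.sum_congr rfl fun z _ => hpt z, ← Finset.sum_filter,
      Finset.sum_const, card_filter_ne_pair hn hxy, if_pos hxy, nsmul_eq_mul,
      Nat.cast_sub (by omega), Nat.cast_ofNat, mul_comm]

lemma sum_ite_ne (hn : 3 ≤ n) (x : Fin n) (K : ℝ) :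
    ∑ y : Fin n, (if x ≠ y then K else 0) = K * ((n : ℝ) - 1) := by
  have : ((univ : Finset (Fin n)).filter fun y => x ≠ y) = univ \ {x} := by
    ext a; simp [eq_comm]
  rw [← Finset.sum_filter, this, Finset.sum_const, card_sdiff_of_subset (subset_univ _),
    card_univ, Fintype.card_fin, card_singleton, nsmul_eq_mul,
    Nat.cast_sub (by omega), Nat.cast_one, mul_comm]


lemma T1_val (hn : 3 ≤ n) :
    ∑ _p ∈ DD n, (1 : ℝ) = (n : ℝ) * ((n : ℝ) - 1) * ((n : ℝ) - 2) := by
  simp only [DD, sum_filter, Fintype.sum_prod_type]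
  rw [Finset.sum_congr rfl fun x _ => Finset.sum_congr rfl fun y _ =>
    sum_ite_dist hn x y 1]
  rw [Finset.sum_congr rfl fun x (_ : x ∈ univ) => sum_ite_ne hn x (1 * ((n:ℝ) - 2))]
  rw [Finset.sum_const, card_univ, Fintype.card_fin, nsmul_eq_mul]
  ring

lemma A_val (hn : 3 ≤ n) :
    ∑ p ∈ DD n, aR G p.1 p.2.1 = ((n : ℝ) - 2) * ∑ x, (G.degree x : ℝ) := by
  simp only [DD, sum_filter, Fintype.sum_prod_type]
  have h1 : ∀ x y : Fin n,
      ∑ z : Fin n, (if x ≠ y ∧ x ≠ z ∧ y ≠ z then aR G x y else 0)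
        = aR G x y * ((n : ℝ) - 2) := by
    intro x y
    rw [sum_ite_dist hn x y (aR G x y)]
    by_cases hxy : x = y
    · simp [hxy, aR_self]
    · rw [if_pos hxy]
  rw [Finset.sum_congr rfl fun x _ => Finset.sum_congr rfl fun y _ => h1 x y]
  rw [Finset.mul_sum]
  refine Finset.sum_congr rfl fun x _ => ?_
  rw [← Finset.sum_mul, sum_aR, mul_comm]

lemma AC_val (hn : 3 ≤ n) :
    ∑ p ∈ DD n, aR G p.1 p.2.1 * aR G p.1 p.2.2
      = ∑ x, ((G.degree x : ℝ)^2 - (G.degree x : ℝ)) := by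
  simp only [DD, sum_filter, Fintype.sum_prod_type]
  have hpt : ∀ x y z : Fin n,
      (if x ≠ y ∧ x ≠ z ∧ y ≠ z then aR G x y * aR G x z else 0)
        = aR G x y * aR G x z - (if y = z then aR G x y * aR G x z else 0) := by
    intro x y z
    by_cases h1 : x = y <;> by_cases h2 : x = z <;> by_cases h3 : y = z <;>
      simp [h1, h2, h3, aR_self]
  have h1 : ∀ x y : Fin n,
      ∑ z : Fin n, (if x ≠ y ∧ x ≠ z ∧ y ≠ z then aR G x y * aR G x z else 0)
        = aR G x y * (G.degree x : ℝ) - aR G x y := by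
    intro x y
    rw [Finset.sum_congr rfl fun z _ => hpt x y z, Finset.sum_sub_distrib,
      ← Finset.mul_sum, sum_aR, Finset.sum_ite_eq]
    simp [aR_mul_self]
  rw [Finset.sum_congr rfl fun x _ => Finset.sum_congr rfl fun y _ => h1 x y]
  refine Finset.sum_congr rfl fun x _ => ?_
  rw [Finset.sum_sub_distrib, ← Finset.sum_mul, sum_aR]
  ring

lemma master2 (hn : 3 ≤ n) : ∑ p ∈ DD n, BB G p =
    (n : ℝ) * ((n : ℝ) - 1) * ((n : ℝ) - 2)
      - (4 * (n : ℝ) - 4) * (∑ x, (G.degree x : ℝ))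
      + 4 * ∑ x, (G.degree x : ℝ)^2 := by
  have hBB : ∀ p ∈ DD n, BB G p =
      1 - aR G p.1 p.2.1 - aR G p.2.1 p.2.2 - 2 * aR G p.1 p.2.2
        + 2 * (aR G p.1 p.2.1 * aR G p.1 p.2.2)
        + 2 * (aR G p.2.1 p.2.2 * aR G p.1 p.2.2) := by
    intro p _; unfold BB; ring
  rw [Finset.sum_congr rfl hBB]
  simp only [Finset.sum_add_distrib, Finset.sum_sub_distrib, ← Finset.mul_sum]
  rw [sum_eq_A G, sum_eq_C G, sum_eq_AC G, T1_val hn, A_val G hn, AC_val G hn,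
    Finset.sum_sub_distrib]
  ring


lemma natCard_eq (F : SimpleGraph (Fin 3)) :
    ((Nat.card {X : Finset (Fin n) // X.card = 3 ∧
        Nonempty (G.induce (↑X : Set (Fin n)) ≃g F)}) : ℝ)
      = ∑ X ∈ powersetCard 3 (univ : Finset (Fin n)),
          indic (Nonempty (G.induce (↑X : Set (Fin n)) ≃g F)) := by
  classical
  rw [Nat.card_eq_fintype_card, Fintype.card_subtype]
  have h2 : ((powersetCard 3 (univ : Finset (Fin n))).filter
        (fun X : Finset (Fin n) => Nonempty (G.induce (↑X : Set (Fin n)) ≃g F)))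
      = (univ.filter fun X : Finset (Fin n) =>
          X.card = 3 ∧ Nonempty (G.induce (↑X : Set (Fin n)) ≃g F)) := by
    ext X
    simp only [mem_filter, mem_powersetCard_univ, mem_univ, true_and, and_assoc]
  rw [← h2, card_filter, Nat.cast_sum]
  refine Finset.sum_congr rfl fun X _ => ?_
  by_cases h : Nonempty (G.induce (↑X : Set (Fin n)) ≃g F)
  · simp [h, indic_pos]
  · simp [h, indic_neg]

end Stmt13Aux

theorem stmt_13 :
    ∃ C : ℝ, ∀ n : ℕ, 3 ≤ n → ∀ (G : SimpleGraph (Fin n)) [DecidableRel G.Adj],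
      0 ≤ (1 / (n.choose 3 : ℝ)) *
          ∑ x : Fin n, ((G.degree x : ℝ) - ((n : ℝ) - 1 - (G.degree x : ℝ)))^2 ∧
      |6 * triDensity n ⊤ G + 6 * triDensity n ⊥ G
          - 2 * triDensity n pathP3 G - 2 * triDensity n pathP3ᶜ G
          - (1 / (n.choose 3 : ℝ)) *
              ∑ x : Fin n, ((G.degree x : ℝ) - ((n : ℝ) - 1 - (G.degree x : ℝ)))^2| ≤ C / n ∧
      triDensity n pathP3 G + triDensity n pathP3ᶜ G - C / n ≤
        3 * triDensity n ⊤ G + 3 * triDensity n ⊥ G := by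
  classical
  refine ⟨18, fun n hn G _ => ?_⟩
  have hn3 : (3 : ℝ) ≤ (n : ℝ) := by exact_mod_cast hn
  have hnpos : (0 : ℝ) < (n : ℝ) := by linarith
  set Ci := ((n.choose 3 : ℕ) : ℝ) with hCi
  have hCpos : 0 < Ci := by
    rw [hCi]; exact_mod_cast Nat.choose_pos hn
  have hC6 : 6 * Ci = (n : ℝ) * ((n : ℝ) - 1) * ((n : ℝ) - 2) := by
    have h1 : n.descFactorial 3 = 6 * n.choose 3 := by
      rw [Nat.descFactorial_eq_factorial_mul_choose]
      norm_num [Nat.factorial]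
    have h2 : n.descFactorial 3 = (n - 2) * ((n - 1) * n) := by
      simp [Nat.descFactorial]
    have h3 : (6 * n.choose 3 : ℕ) = (n - 2) * ((n - 1) * n) := by rw [← h1, h2]
    have h4 : ((6 * n.choose 3 : ℕ) : ℝ) = (((n - 2) * ((n - 1) * n) : ℕ) : ℝ) := by
      exact_mod_cast congrArg (Nat.cast : ℕ → ℝ) h3
    rw [hCi]
    push_cast [Nat.cast_sub (by omega : 1 ≤ n), Nat.cast_sub (by omega : 2 ≤ n)] at h4
    linarith [h4]
  obtain ⟨NT, hNT⟩ : ∃ r : ℝ, r = ((Nat.card {X : Finset (Fin n) // X.card = 3 ∧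
      Nonempty (G.induce (↑X : Set (Fin n)) ≃g (⊤ : SimpleGraph (Fin 3)))}) : ℝ) := ⟨_, rfl⟩
  obtain ⟨NB, hNB⟩ : ∃ r : ℝ, r = ((Nat.card {X : Finset (Fin n) // X.card = 3 ∧
      Nonempty (G.induce (↑X : Set (Fin n)) ≃g (⊥ : SimpleGraph (Fin 3)))}) : ℝ) := ⟨_, rfl⟩
  obtain ⟨NP, hNP⟩ : ∃ r : ℝ, r = ((Nat.card {X : Finset (Fin n) // X.card = 3 ∧
      Nonempty (G.induce (↑X : Set (Fin n)) ≃g pathP3)}) : ℝ) := ⟨_, rfl⟩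
  obtain ⟨NPc, hNPc⟩ : ∃ r : ℝ, r = ((Nat.card {X : Finset (Fin n) // X.card = 3 ∧
      Nonempty (G.induce (↑X : Set (Fin n)) ≃g pathP3ᶜ)}) : ℝ) := ⟨_, rfl⟩
  have eT : triDensity n ⊤ G = NT / Ci := by rw [hNT, hCi]; rfl
  have eB : triDensity n ⊥ G = NB / Ci := by rw [hNB, hCi]; rfl
  have eP : triDensity n pathP3 G = NP / Ci := by rw [hNP, hCi]; rfl
  have ePc : triDensity n pathP3ᶜ G = NPc / Ci := by rw [hNPc, hCi]; rfl
  obtain ⟨Sd, hSd⟩ : ∃ r : ℝ, r = ∑ x : Fin n, (G.degree x : ℝ) := ⟨_, rfl⟩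
  obtain ⟨Sd2, hSd2⟩ : ∃ r : ℝ, r = ∑ x : Fin n, (G.degree x : ℝ) ^ 2 := ⟨_, rfl⟩
  have hS : (∑ x : Fin n, ((G.degree x : ℝ) - ((n : ℝ) - 1 - (G.degree x : ℝ))) ^ 2)
      = 4 * Sd2 - (4 * (n : ℝ) - 4) * Sd + (n : ℝ) * ((n : ℝ) - 1) ^ 2 := by
    have hpt : ∀ x : Fin n, ((G.degree x : ℝ) - ((n : ℝ) - 1 - (G.degree x : ℝ))) ^ 2
        = 4 * (G.degree x : ℝ) ^ 2 - (4 * (n : ℝ) - 4) * (G.degree x : ℝ)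
          + ((n : ℝ) - 1) ^ 2 := fun x => by ring
    rw [Finset.sum_congr rfl fun x _ => hpt x, Finset.sum_add_distrib,
      Finset.sum_sub_distrib, ← Finset.mul_sum, ← Finset.mul_sum, Finset.sum_const,
      card_univ, Fintype.card_fin, nsmul_eq_mul, ← hSd, ← hSd2]
    try ring
  have key : 6 * NT + 6 * NB - 2 * NP - 2 * NPc
      = (4 * Sd2 - (4 * (n : ℝ) - 4) * Sd + (n : ℝ) * ((n : ℝ) - 1) ^ 2)
        - (n : ℝ) * ((n : ℝ) - 1) := by
    rw [hNT, hNB, hNP, hNPc, Stmt13Aux.natCard_eq G ⊤, Stmt13Aux.natCard_eq G ⊥,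
      Stmt13Aux.natCard_eq G pathP3, Stmt13Aux.natCard_eq G pathP3ᶜ,
      Finset.mul_sum, Finset.mul_sum, Finset.mul_sum, Finset.mul_sum,
      ← Finset.sum_add_distrib, ← Finset.sum_sub_distrib, ← Finset.sum_sub_distrib,
      ← Stmt13Aux.master1 G, Stmt13Aux.master2 G hn, ← hSd, ← hSd2]
    try ring
  have hb : (n : ℝ) * ((n : ℝ) - 1) / Ci ≤ 18 / (n : ℝ) := by
    rw [div_le_div_iff₀ hCpos hnpos]
    nlinarith [hC6, hn3, hnpos]
  have hSnn : 0 ≤ ∑ x : Fin n, ((G.degree x : ℝ) - ((n : ℝ) - 1 - (G.degree x : ℝ))) ^ 2 :=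
    Finset.sum_nonneg fun x _ => sq_nonneg _
  refine ⟨mul_nonneg (by positivity) hSnn, ?_, ?_⟩
  · rw [eT, eB, eP, ePc, hS]
    have hid : 6 * (NT / Ci) + 6 * (NB / Ci) - 2 * (NP / Ci) - 2 * (NPc / Ci)
        - 1 / Ci * (4 * Sd2 - (4 * (n : ℝ) - 4) * Sd + (n : ℝ) * ((n : ℝ) - 1) ^ 2)
        = -((n : ℝ) * ((n : ℝ) - 1)) / Ci := by
      field_simp
      linarith [key]
    rw [hid]
    rw [abs_div, abs_of_nonpos (by nlinarith : -((n : ℝ) * ((n : ℝ) - 1)) ≤ 0),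
      abs_of_pos hCpos, neg_neg]
    exact hb
  · rw [eT, eB, eP, ePc]
    have hq : 0 ≤ (4 * Sd2 - (4 * (n : ℝ) - 4) * Sd + (n : ℝ) * ((n : ℝ) - 1) ^ 2) := by
      rw [← hS]; exact hSnn
    have h1 : 6 * (NT / Ci) + 6 * (NB / Ci) - 2 * (NP / Ci) - 2 * (NPc / Ci)
        = (6 * NT + 6 * NB - 2 * NP - 2 * NPc) / Ci := by ring
    have h2 : 0 ≤ (4 * Sd2 - (4 * (n : ℝ) - 4) * Sd + (n : ℝ) * ((n : ℝ) - 1) ^ 2) / Ci :=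
      div_nonneg hq (le_of_lt hCpos)
    have h3 : (6 * NT + 6 * NB - 2 * NP - 2 * NPc) / Ci
        = (4 * Sd2 - (4 * (n : ℝ) - 4) * Sd + (n : ℝ) * ((n : ℝ) - 1) ^ 2) / Ci
          - ((n : ℝ) * ((n : ℝ) - 1)) / Ci := by
      rw [key, sub_div]
    have ht : 0 ≤ 18 / (n : ℝ) := by positivity
    linarith [hb, h2, h3, h1, ht]
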